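/- For any nonzero algebraic number α, the naive height and the logarithmic Weil height satisfy log H(α) ≤ deg(α) · (h(α) + log 2), where deg(α) is the degree of α over ℚ. -/

import Mathlib

open Polynomial

/-- The primitive integer minimal polynomial of an algebraic number. -/
noncomputable def intMinpoly (γ : ℂ) : Polynomial ℤ :=
  (IsLocalization.integerNormalization (nonZeroDivisors ℤ) (minpoly ℚ γ)).primPart

/-- The naive height of an algebraic number: the maximal absolute value of the
coefficients of its minimal polynomial over `ℤ`. -/
noncomputable def naiveHeight (γ : ℂ) : ℝ :=
  ((intMinpoly γ).support.sup fun i => ((intMinpoly γ).coeff i).natAbs : ℕ)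

/-- The absolute logarithmic Weil height of an algebraic number, via the Mahler measure
of its primitive integer minimal polynomial. -/
noncomputable def logWeilHeight (γ : ℂ) : ℝ :=
  (1 / ((minpoly ℚ γ).natDegree : ℝ)) *
    (Real.log |((intMinpoly γ).leadingCoeff : ℝ)| +
      (((intMinpoly γ).aroots ℂ).map fun z => Real.log (max 1 (‖z‖))).sum)

section Aux
open Multiset

lemma max_abs_pos (z : ℂ) : (0:ℝ) < max 1 (‖z‖) :=
  lt_of_lt_of_le one_pos (le_max_left _ _)

lemma prod_max_one_le {s t : Multiset ℂ} (h : s ≤ t) :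
    (s.map fun z => max 1 (‖z‖)).prod ≤ (t.map fun z => max 1 (‖z‖)).prod := by
  obtain ⟨u, hu⟩ := Multiset.le_iff_exists_add.1 (Multiset.map_le_map (f := fun z => max 1 (‖z‖)) h)
  rw [hu, Multiset.prod_add]
  have hu1 : (1:ℝ) ≤ u.prod := by
    apply Multiset.one_le_prod
    intro a ha
    have ha' : a ∈ t.map (fun z => max 1 (‖z‖)) := by
      rw [hu]; exact Multiset.mem_add.2 (Or.inr ha)
    obtain ⟨z, _, rfl⟩ := Multiset.mem_map.1 ha'
    exact le_max_left _ _
  have hs0 : (0:ℝ) ≤ (s.map fun z => max 1 (‖z‖)).prod := by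
    apply Multiset.prod_nonneg
    intro a ha
    obtain ⟨z, _, rfl⟩ := Multiset.mem_map.1 ha
    exact (max_abs_pos z).le
  nlinarith

lemma esymm_abs_le (t : Multiset ℂ) (k : ℕ) :
    ‖t.esymm k‖ ≤
      ((Multiset.card t).choose k : ℝ) * ((t.map fun z => max 1 (‖z‖)).prod) := by
  have key : ∀ s ∈ t.powersetCard k,
      ‖s.prod‖ ≤ (t.map fun z => max 1 (‖z‖)).prod := by
    intro s hs
    rw [Multiset.mem_powersetCard] at hs
    rw [show ‖s.prod‖ = (s.map norm).prod from map_multiset_prod (normHom : ℂ →*₀ ℝ) s]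
    have h2 : (s.map norm).prod ≤ (s.map fun z => max 1 (‖z‖)).prod :=
      Multiset.prod_map_le_prod_map₀ _ _ (fun i _ => norm_nonneg i)
        (fun i _ => le_max_right _ _)
    exact h2.trans (prod_max_one_le hs.1)
  calc ‖t.esymm k‖ = ‖((t.powersetCard k).map Multiset.prod).sum‖ := by
        rfl
    _ ≤ ((((t.powersetCard k).map Multiset.prod)).map norm).sum := norm_multiset_sum_le _
    _ ≤ (Multiset.card ((((t.powersetCard k).map Multiset.prod)).map norm)) •
          ((t.map fun z => max 1 (‖z‖)).prod) := by
        apply Multiset.sum_le_card_nsmul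
        intro x hx
        rw [Multiset.map_map] at hx
        obtain ⟨s, hs, rfl⟩ := Multiset.mem_map.1 hx
        rw [Function.comp_apply]
        exact key s hs
    _ = ((Multiset.card t).choose k : ℝ) * ((t.map fun z => max 1 (‖z‖)).prod) := by
        rw [Multiset.card_map, Multiset.card_map, Multiset.card_powersetCard, nsmul_eq_mul]

lemma log_sum_max (t : Multiset ℂ) :
    (t.map fun z => Real.log (max 1 (‖z‖))).sum =
      Real.log ((t.map fun z => max 1 (‖z‖)).prod) := by
  induction t using Multiset.induction with
  | empty => simp
  | cons a s ih =>
      have h2 : (0:ℝ) < (s.map fun z => max 1 (‖z‖)).prod := by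
        apply Multiset.prod_pos
        intro x hx
        obtain ⟨z, _, rfl⟩ := Multiset.mem_map.1 hx
        exact max_abs_pos z
      simp only [Multiset.map_cons, Multiset.sum_cons, Multiset.prod_cons, ih,
        Real.log_mul (max_abs_pos a).ne' h2.ne']

end Aux

/-- For any nonzero algebraic number `α`,
`log H(α) ≤ deg(α) · (h(α) + log 2)`. -/
theorem stmt12 (α : ℂ) (hα : α ≠ 0) (halg : IsAlgebraic ℚ α) :
    Real.log (naiveHeight α) ≤
      ((minpoly ℚ α).natDegree : ℝ) * (logWeilHeight α + Real.log 2) := by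
  classical
  have hint := halg.isIntegral
  have hp0 : minpoly ℚ α ≠ 0 := minpoly.ne_zero hint
  -- facts about intMinpoly
  obtain ⟨b, hb⟩ := IsLocalization.integerNormalization_map_to_map (nonZeroDivisors ℤ) (minpoly ℚ α)
  have hbne : (b:ℤ) ≠ 0 := nonZeroDivisors.coe_ne_zero b
  have hN0 : IsLocalization.integerNormalization (nonZeroDivisors ℤ) (minpoly ℚ α) ≠ 0 := by
    intro h
    rw [h, Polynomial.map_zero] at hb
    exact (smul_ne_zero hbne hp0) hb.symm
  have hNdeg : (IsLocalization.integerNormalization (nonZeroDivisors ℤ) (minpoly ℚ α)).natDegree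
      = (minpoly ℚ α).natDegree := by
    have h1 := Polynomial.natDegree_map_eq_of_injective
      (f := algebraMap ℤ ℚ) (fun a b h => by exact_mod_cast h)
      (IsLocalization.integerNormalization (nonZeroDivisors ℤ) (minpoly ℚ α))
    rw [hb] at h1
    rw [← h1, zsmul_eq_mul]
    have hc : ((b:ℤ) : ℚ[X]) = C ((b:ℤ) : ℚ) := by simp
    rw [hc, natDegree_C_mul (by exact_mod_cast hbne)]
  set P : ℤ[X] := intMinpoly α with hP
  have hP0 : P ≠ 0 := Polynomial.primPart_ne_zero _
  have hPdeg : P.natDegree = (minpoly ℚ α).natDegree := by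
    rw [hP, intMinpoly, Polynomial.natDegree_primPart, hNdeg]
  set d : ℕ := (minpoly ℚ α).natDegree with hd
  have hd1 : 0 < d := minpoly.natDegree_pos hint
  -- the complex polynomial
  set Q : ℂ[X] := P.map (algebraMap ℤ ℂ) with hQ
  have hinj : Function.Injective (algebraMap ℤ ℂ) := fun a b h => Int.cast_injective h
  have hQ0 : Q ≠ 0 := by
    rw [hQ]
    exact (Polynomial.map_ne_zero_iff hinj).2 hP0
  have hQdeg : Q.natDegree = d := by
    rw [hQ, Polynomial.natDegree_map_eq_of_injective hinj, hPdeg]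
  have hcard : Multiset.card Q.roots = Q.natDegree :=
    Polynomial.splits_iff_card_roots.1 (IsAlgClosed.splits Q)
  -- abbreviations
  set B : ℝ := (Q.roots.map fun z => max 1 (‖z‖)).prod with hB
  have hB1 : (1:ℝ) ≤ B := by
    apply Multiset.one_le_prod
    intro a ha
    obtain ⟨z, _, rfl⟩ := Multiset.mem_map.1 ha
    exact le_max_left _ _
  set L : ℝ := |((P.leadingCoeff : ℤ) : ℝ)| with hL
  have hlead0 : P.leadingCoeff ≠ 0 := leadingCoeff_ne_zero.2 hP0
  have hL1 : (1:ℝ) ≤ L := by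
    rw [hL]
    have : (1:ℤ) ≤ |P.leadingCoeff| := Int.one_le_abs hlead0
    calc (1:ℝ) ≤ ((|P.leadingCoeff| : ℤ) : ℝ) := by exact_mod_cast this
      _ = |((P.leadingCoeff : ℤ) : ℝ)| := by push_cast; ring
  have hQlead : Q.leadingCoeff = (algebraMap ℤ ℂ) P.leadingCoeff := by
    rw [hQ, Polynomial.leadingCoeff_map_of_injective hinj]
  have hQleadabs : ‖Q.leadingCoeff‖ = L := by
    rw [hQlead, hL]
    simp [Complex.norm_intCast]
  -- coefficient bound
  have coeffbd : ∀ i, ((P.coeff i).natAbs : ℝ) ≤ L * (2:ℝ)^d * B := by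
    intro i
    have habs : ((P.coeff i).natAbs : ℝ) = ‖Q.coeff i‖ := by
      rw [hQ, Polynomial.coeff_map]
      rw [show (algebraMap ℤ ℂ) (P.coeff i) = ((P.coeff i : ℤ) : ℂ) from rfl,
        Complex.norm_intCast]
      rw [Nat.cast_natAbs]
      push_cast
      ring
    rw [habs]
    rcases le_or_gt i Q.natDegree with hi | hi
    · rw [Polynomial.coeff_eq_esymm_roots_of_card hcard hi]
      rw [norm_mul, norm_mul, hQleadabs]
      have h1 : ‖(-1:ℂ) ^ (Q.natDegree - i)‖ = 1 := by
        rw [norm_pow]; simp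
      rw [h1, mul_one]
      have h2 := esymm_abs_le Q.roots (Q.natDegree - i)
      rw [hcard, ← hB] at h2
      have h3 : ((Q.natDegree.choose (Q.natDegree - i)) : ℝ) ≤ (2:ℝ)^d := by
        have : Q.natDegree.choose (Q.natDegree - i) ≤ 2 ^ d := by
          rw [← hQdeg]
          calc Q.natDegree.choose (Q.natDegree - i)
              ≤ ∑ j ∈ Finset.range (Q.natDegree + 1), Q.natDegree.choose j :=
                Finset.single_le_sum (f := fun j => Q.natDegree.choose j)
                  (fun _ _ => Nat.zero_le _)
                  (Finset.mem_range.2 (Nat.lt_succ_of_le (Nat.sub_le _ _)))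
            _ = 2 ^ Q.natDegree := Nat.sum_range_choose _
        exact_mod_cast this
      calc L * ‖Q.roots.esymm (Q.natDegree - i)‖
          ≤ L * (((Q.natDegree.choose (Q.natDegree - i)) : ℝ) * B) := by
            apply mul_le_mul_of_nonneg_left h2 (by linarith)
        _ ≤ L * ((2:ℝ)^d * B) := by
            apply mul_le_mul_of_nonneg_left _ (by linarith)
            exact mul_le_mul_of_nonneg_right h3 (by linarith)
        _ = L * (2:ℝ)^d * B := by ring
    · rw [Polynomial.coeff_eq_zero_of_natDegree_lt hi]
      simp only [norm_zero]
      positivity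
  -- the naive height
  have hsupp : P.support.Nonempty := Polynomial.support_nonempty.2 hP0
  obtain ⟨i₀, hi₀, hsup⟩ := Finset.exists_mem_eq_sup P.support hsupp
    (fun i => (P.coeff i).natAbs)
  have hH : naiveHeight α = ((P.coeff i₀).natAbs : ℝ) := by
    rw [naiveHeight, ← hP, hsup]
  have hHpos : (0:ℝ) < naiveHeight α := by
    rw [hH]
    have : P.coeff i₀ ≠ 0 := Polynomial.mem_support_iff.1 hi₀
    have : 0 < (P.coeff i₀).natAbs := Int.natAbs_pos.2 this
    exact_mod_cast this
  have hHle : naiveHeight α ≤ L * (2:ℝ)^d * B := by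
    rw [hH]; exact coeffbd i₀
  -- log computation
  have hRHS : (d:ℝ) * (logWeilHeight α + Real.log 2) = Real.log (L * (2:ℝ)^d * B) := by
    have hdne : (d:ℝ) ≠ 0 := Nat.cast_ne_zero.2 hd1.ne'
    have haroots : P.aroots ℂ = Q.roots := rfl
    rw [logWeilHeight, ← hd, ← hP, haroots, log_sum_max, ← hB]
    have hLeq : Real.log |((P.leadingCoeff : ℤ) : ℝ)| = Real.log L := by rw [hL]
    rw [hLeq]
    rw [mul_add, ← mul_assoc, mul_one_div_cancel hdne, one_mul]
    rw [Real.log_mul (by positivity) (by linarith), Real.log_mul (by positivity) (by positivity),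
      Real.log_pow]
    ring
  rw [hRHS]
  exact Real.log_le_log hHpos hHle
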